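/- Let (e_n) be a normalised unconditional Schauder basis of a Banach space X such that every block subspace [x_n] is complemented by a projection P of the form Pz = Σ x*_n(z) x_n with supp x*_n ⊆ supp x_n. Then any two normalised block sequences (x_n) and (y_n) of (e_n) satisfying x_1 < y_1 < x_2 < y_2 < ... (i.e., max supp x_n < min supp y_n < min supp x_{n+1}) are equivalent, meaning Σ a_n x_n converges if and only if Σ a_n y_n converges. -/

import Mathlib

open Filter Topology

noncomputable section

structure SchauderBasisOld (X : Type*) [NormedAddCommGroup X] [NormedSpace ℝ X] where
  e : ℕ → X
  coord : ℕ → X →L[ℝ] ℝ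
  biorth : ∀ n m, coord n (e m) = if n = m then 1 else 0
  expansion : ∀ x : X,
    Filter.Tendsto (fun N => ∑ n ∈ Finset.range N, coord n x • e n) Filter.atTop (nhds x)
  normalised : ∀ n, ‖e n‖ = 1

section Defs

variable {X Y : Type*} [NormedAddCommGroup X] [NormedSpace ℝ X]
  [NormedAddCommGroup Y] [NormedSpace ℝ Y]

/-- Convergence of the series `∑ x n` (of partial sums). -/
def Converges (x : ℕ → X) : Prop :=
  ∃ s, Filter.Tendsto (fun N => ∑ n ∈ Finset.range N, x n) Filter.atTop (nhds s)

/-- Two sequences are equivalent if the same scalar series converge. -/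
def SeqEquiv (x : ℕ → X) (y : ℕ → Y) : Prop :=
  ∀ a : ℕ → ℝ, Converges (fun n => a n • x n) ↔ Converges (fun n => a n • y n)

/-- `C`-equivalence of two sequences. -/
def CEquiv (C : ℝ) (x : ℕ → X) (y : ℕ → Y) : Prop :=
  ∀ (a : ℕ → ℝ) (N : ℕ),
    C⁻¹ * ‖∑ n ∈ Finset.range N, a n • y n‖ ≤ ‖∑ n ∈ Finset.range N, a n • x n‖ ∧
    ‖∑ n ∈ Finset.range N, a n • x n‖ ≤ C * ‖∑ n ∈ Finset.range N, a n • y n‖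

/-- A basic sequence: uniformly bounded partial-sum projections. -/
def IsBasicSeq (x : ℕ → X) : Prop :=
  ∃ K, 1 ≤ K ∧ ∀ (a : ℕ → ℝ) (m n : ℕ), m ≤ n →
    ‖∑ i ∈ Finset.range m, a i • x i‖ ≤ K * ‖∑ i ∈ Finset.range n, a i • x i‖

/-- A sequence of signs. -/
def IsSigns (θ : ℕ → ℝ) : Prop := ∀ n, θ n = 1 ∨ θ n = -1

end Defs

namespace SchauderBasisOld

variable {X : Type*} [NormedAddCommGroup X] [NormedSpace ℝ X] (b : SchauderBasisOld X)

/-- Support of a vector with respect to the basis. -/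
def supp (x : X) : Set ℕ := {n | b.coord n x ≠ 0}

/-- A normalised block sequence of the basis. -/
def IsBlockSeq (x : ℕ → X) : Prop :=
  (∀ n, ‖x n‖ = 1) ∧ (∀ n, (b.supp (x n)).Finite) ∧
  ∀ n, ∀ i ∈ b.supp (x n), ∀ j ∈ b.supp (x (n+1)), i < j

/-- Unconditionality of the basis. -/
def Unconditional : Prop :=
  ∀ θ : ℕ → ℝ, IsSigns θ → SeqEquiv (fun n => θ n • b.e n) b.e

/-- 1-unconditionality (finite-sum form). -/
def OneUnconditional : Prop :=
  ∀ (θ a : ℕ → ℝ), IsSigns θ → ∀ N,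
    ‖∑ n ∈ Finset.range N, (θ n * a n) • b.e n‖ ≤ ‖∑ n ∈ Finset.range N, a n • b.e n‖

/-- The shift property: every normalised block sequence is equivalent to its shift. -/
def ShiftProperty : Prop :=
  ∀ x : ℕ → X, b.IsBlockSeq x → SeqEquiv x (fun n => x (n+1))

/-- The basis is shrinking. -/
def Shrinking : Prop :=
  ∀ f : X →L[ℝ] ℝ, Filter.Tendsto
    (fun n => sSup ((fun y => |f y|) ''
      {y | y ∈ Submodule.span ℝ (Set.range fun i => b.e (n + i)) ∧ ‖y‖ ≤ 1}))
    Filter.atTop (nhds 0)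

/-- The basis is boundedly complete. -/
def BoundedlyComplete : Prop :=
  ∀ a : ℕ → ℝ, (∃ M, ∀ N, ‖∑ i ∈ Finset.range N, a i • b.e i‖ ≤ M) →
    Converges (fun i => a i • b.e i)

end SchauderBasisOld

namespace Interlaced
set_option linter.unusedSectionVars false
set_option linter.dupNamespace false
set_option maxHeartbeats 1000000
open Finset
open scoped Classical
variable {X : Type*} [NormedAddCommGroup X] [NormedSpace ℝ X]

/-- partial sums -/
def PS (v : ℕ → X) (N : ℕ) : X := ∑ n ∈ Finset.range N, v n

lemma converges_def (v : ℕ → X) : Converges v ↔ ∃ s, Filter.Tendsto (PS v) atTop (nhds s) := Iff.rfl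

lemma PS_sub (v : ℕ → X) {N M : ℕ} (h : N ≤ M) :
    PS v M - PS v N = ∑ n ∈ Finset.Ico N M, v n := by
  rw [PS, PS, ← Finset.sum_range_add_sum_Ico v h]; abel

lemma converges_iff_cauchy [CompleteSpace X] (v : ℕ → X) :
    Converges v ↔ CauchySeq (PS v) := by
  constructor
  · rintro ⟨s, hs⟩; exact hs.cauchySeq
  · intro h; exact cauchySeq_tendsto_of_complete h

lemma Converges.add {v w : ℕ → X} (hv : Converges v) (hw : Converges w) :
    Converges (fun n => v n + w n) := by
  obtain ⟨s, hs⟩ := hv; obtain ⟨t, ht⟩ := hw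
  refine ⟨s + t, ?_⟩
  have := hs.add ht
  simpa [PS, Finset.sum_add_distrib] using this

lemma Converges.const_smul {v : ℕ → X} (hv : Converges v) (c : ℝ) :
    Converges (fun n => c • v n) := by
  obtain ⟨s, hs⟩ := hv
  refine ⟨c • s, ?_⟩
  have := hs.const_smul c
  simpa [PS, Finset.smul_sum] using this

/-- convergence only depends on tails -/
lemma converges_of_eventually_eq {v w : ℕ → X} (N₀ : ℕ) (h : ∀ n, N₀ ≤ n → v n = w n)
    (hv : Converges v) : Converges w := by
  obtain ⟨s, hs⟩ := hv
  refine ⟨s + (PS w N₀ - PS v N₀), ?_⟩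
  have key : ∀ M, N₀ ≤ M → PS w M = PS v M + (PS w N₀ - PS v N₀) := by
    intro M hM
    have h1 : PS w M - PS w N₀ = PS v M - PS v N₀ := by
      rw [PS_sub _ hM, PS_sub _ hM]
      exact (Finset.sum_congr rfl (fun n hn => (h n (Finset.mem_Ico.1 hn).1).symm))
    abel_nf
    abel_nf at h1
    linear_combination (norm := abel1) h1
  have : Filter.Tendsto (fun M => PS v M + (PS w N₀ - PS v N₀)) atTop
      (nhds (s + (PS w N₀ - PS v N₀))) := hs.add_const _
  exact this.congr' (by filter_upwards [Filter.eventually_ge_atTop N₀] with M hM using (key M hM).symm)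




variable {X : Type*} [NormedAddCommGroup X] [NormedSpace ℝ X] (b : SchauderBasisOld X)

/-- a vector with finite support equals the obvious finite sum of basis vectors -/
lemma finsupp_eq (v : X) (S : Finset ℕ) (hS : ∀ j, j ∉ S → b.coord j v = 0)
    {N : ℕ} (hN : ∀ j ∈ S, j < N) :
    ∑ j ∈ Finset.range N, b.coord j v • b.e j = v := by
  have hconst : ∀ M, N ≤ M →
      (∑ j ∈ Finset.range M, b.coord j v • b.e j) = ∑ j ∈ Finset.range N, b.coord j v • b.e j := by
    intro M hM
    rw [← Finset.sum_range_add_sum_Ico _ hM]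
    have : ∑ j ∈ Finset.Ico N M, b.coord j v • b.e j = 0 := by
      apply Finset.sum_eq_zero
      intro j hj
      have hjN : N ≤ j := (Finset.mem_Ico.1 hj).1
      have : j ∉ S := fun hjS => absurd (hN j hjS) (not_lt.2 hjN)
      rw [hS j this, zero_smul]
    rw [this, add_zero]
  have h1 : Filter.Tendsto (fun M => ∑ j ∈ Finset.range M, b.coord j v • b.e j) atTop
      (nhds (∑ j ∈ Finset.range N, b.coord j v • b.e j)) := by
    apply Filter.Tendsto.congr' _ tendsto_const_nhds
    filter_upwards [Filter.eventually_ge_atTop N] with M hM using (hconst M hM).symm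
  exact tendsto_nhds_unique h1 (b.expansion v)

/-- evaluation of a functional vanishing off `T` at a finitely supported vector
whose support misses `T` -/
lemma eval_zero (f : X →L[ℝ] ℝ) (T : Set ℕ) (hf : ∀ m, m ∉ T → f (b.e m) = 0)
    (v : X) (hfin : (b.supp v).Finite) (hdisj : ∀ j, j ∈ b.supp v → j ∉ T) :
    f v = 0 := by
  classical
  set S := hfin.toFinset with hSdef
  have hS : ∀ j, j ∉ S → b.coord j v = 0 := by
    intro j hj
    by_contra h
    exact hj (by simpa [hSdef, SchauderBasisOld.supp] using h)
  obtain ⟨N, hN⟩ : ∃ N, ∀ j ∈ S, j < N := ⟨(S.sup id) + 1, fun j hj =>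
    Nat.lt_succ_of_le (Finset.le_sup (f := id) hj)⟩
  have hv := finsupp_eq b v S hS hN
  rw [← hv, map_sum]
  apply Finset.sum_eq_zero
  intro j _
  by_cases hc : b.coord j v = 0
  · simp [hc]
  · have hj : j ∈ b.supp v := hc
    rw [map_smul, hf j (hdisj j hj), smul_eq_mul, mul_zero]

/-- supports of block vectors are nonempty -/
lemma supp_nonempty {x : ℕ → X} (hx : b.IsBlockSeq x) (n : ℕ) : (b.supp (x n)).Nonempty := by
  by_contra h
  have hz : ∀ j, b.coord j (x n) = 0 := by
    intro j; by_contra hj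
    exact h ⟨j, hj⟩
  have : x n = 0 := by
    have h0 : Filter.Tendsto (fun N => ∑ j ∈ Finset.range N, b.coord j (x n) • b.e j)
        atTop (nhds (0 : X)) := by
      have : (fun N => ∑ j ∈ Finset.range N, b.coord j (x n) • b.e j) = fun _ => (0:X) := by
        funext N; apply Finset.sum_eq_zero; intro j _; rw [hz j, zero_smul]
      rw [this]; exact tendsto_const_nhds
    exact tendsto_nhds_unique (b.expansion (x n)) h0
  have h1 := hx.1 n
  rw [this, norm_zero] at h1
  norm_num at h1
/-- pairwise ordering of supports of block sequences -/
lemma supp_ord {x : ℕ → X} (hx : b.IsBlockSeq x) :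
    ∀ m n, m < n → ∀ i ∈ b.supp (x m), ∀ j ∈ b.supp (x n), i < j := by
  intro m n
  induction n with
  | zero => omega
  | succ n ih =>
    intro hlt i hi j hj
    rcases Nat.lt_succ_iff_lt_or_eq.1 hlt with h | h
    · obtain ⟨k, hk⟩ := supp_nonempty b hx n
      exact lt_trans (ih h i hi k hk) (hx.2.2 n k hk j hj)
    · subst h
      exact hx.2.2 m i hi j hj

lemma supp_disjoint {x : ℕ → X} (hx : b.IsBlockSeq x) {m n : ℕ} (h : m ≠ n) :
    ∀ j, j ∈ b.supp (x m) → j ∉ b.supp (x n) := by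
  intro j hjm hjn
  rcases Nat.lt_or_ge m n with hlt | hge
  · exact lt_irrefl j (supp_ord b hx m n hlt j hjm j hjn)
  · have : n < m := lt_of_le_of_ne hge (Ne.symm h)
    exact lt_irrefl j (supp_ord b hx n m this j hjn j hjm)

/-- if `f` kills all `v m` except `m = n₀`, then `f` of the sum-limit is `f (v n₀)` -/
lemma eval_series (f : X →L[ℝ] ℝ) (v : ℕ → X) (σ : X)
    (h : Filter.Tendsto (fun N => ∑ n ∈ Finset.range N, v n) atTop (nhds σ))
    (n₀ : ℕ) (hvan : ∀ m, m ≠ n₀ → f (v m) = 0) : f σ = f (v n₀) := by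
  have h1 : Filter.Tendsto (fun N => f (∑ n ∈ Finset.range N, v n)) atTop (nhds (f σ)) :=
    (f.continuous.tendsto σ).comp h
  have h2 : ∀ N, n₀ < N → f (∑ n ∈ Finset.range N, v n) = f (v n₀) := by
    intro N hN
    rw [map_sum]
    exact Finset.sum_eq_single_of_mem n₀ (Finset.mem_range.2 hN) (fun m _ hm => hvan m hm)
  have h3 : Filter.Tendsto (fun N => f (∑ n ∈ Finset.range N, v n)) atTop (nhds (f (v n₀))) := by
    apply Filter.Tendsto.congr' _ tendsto_const_nhds
    filter_upwards [Filter.eventually_ge_atTop (n₀+1)] with N hN using (h2 N hN).symm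
  exact tendsto_nhds_unique h1 h3

/-- biorthogonality of the `hcompl`-functionals -/
lemma biorth_block {x : ℕ → X} (hx : b.IsBlockSeq x) (f : ℕ → X →L[ℝ] ℝ) (P : X →L[ℝ] X)
    (hsupp : ∀ n, ∀ m, m ∉ b.supp (x n) → f n (b.e m) = 0)
    (hser : ∀ z : X, Filter.Tendsto (fun N => ∑ n ∈ Finset.range N, f n z • x n)
      Filter.atTop (nhds (P z)))
    (hfix : ∀ n, P (x n) = x n) :
    ∀ n m, f n (x m) = if n = m then 1 else 0 := by
  have hvan : ∀ n m, n ≠ m → f n (x m) = 0 := by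
    intro n m hnm
    exact eval_zero b (f n) (b.supp (x n)) (hsupp n) (x m) (hx.2.1 m)
      (fun j hj => supp_disjoint b hx (Ne.symm hnm) j hj)
  intro n m
  by_cases h : n = m
  · subst h; simp only [if_pos rfl]
    -- partial sums of ∑ f k (x n) • x k eventually constant = f n (x n) • x n
    have h2 : ∀ N, n < N → (∑ k ∈ Finset.range N, f k (x n) • x k) = f n (x n) • x n := by
      intro N hN
      exact Finset.sum_eq_single_of_mem n (Finset.mem_range.2 hN)
        (fun m _ hm => by rw [hvan m n hm, zero_smul])
    have h3 : Filter.Tendsto (fun N => ∑ k ∈ Finset.range N, f k (x n) • x k) atTop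
        (nhds (f n (x n) • x n)) := by
      apply Filter.Tendsto.congr' _ tendsto_const_nhds
      filter_upwards [Filter.eventually_ge_atTop (n+1)] with N hN using (h2 N hN).symm
    have h4 := hser (x n)
    rw [hfix n] at h4
    have h5 : f n (x n) • x n = x n := tendsto_nhds_unique h3 h4
    have hxn : x n ≠ 0 := by
      intro hc
      have := hx.1 n
      rw [hc, norm_zero] at this; norm_num at this
    have h6 : (f n (x n) - 1) • x n = 0 := by
      rw [sub_smul, one_smul, h5, sub_self]
    rcases smul_eq_zero.1 h6 with hc | hc
    · exact sub_eq_zero.1 hc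
    · exact absurd hc hxn
  · simp only [if_neg h]; exact hvan n m h
/-- elements of the support of the n-th block are ≥ n -/
lemma supp_ge {q : ℕ → X} (hq : b.IsBlockSeq q) :
    ∀ n, ∀ j ∈ b.supp (q n), n ≤ j := by
  intro n
  induction n with
  | zero => intro j _; exact Nat.zero_le j
  | succ n ih =>
    intro j hj
    obtain ⟨k, hk⟩ := supp_nonempty b hq n
    have h1 := ih k hk
    have h2 := hq.2.2 n k hk j hj
    omega

/-- sign changes at block level preserve convergence -/
lemma sign_mult {q : ℕ → X} (hq : b.IsBlockSeq q) (hu : b.Unconditional)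
    (s θ : ℕ → ℝ) (hθ : IsSigns θ)
    (h : Converges fun n => s n • q n) : Converges fun n => (θ n * s n) • q n := by
  classical
  obtain ⟨σ, hσ⟩ := h
  have hSne : ∀ n, ((hq.2.1 n).toFinset).Nonempty := by
    intro n
    rw [Set.Finite.toFinset_nonempty]
    exact supp_nonempty b hq n
  set Sq : ℕ → Finset ℕ := fun n => (hq.2.1 n).toFinset with hSq
  have hmemS : ∀ n j, j ∈ Sq n ↔ j ∈ b.supp (q n) := by
    intro n j; simp [hSq]
  set Bnd : ℕ → ℕ := fun N => Nat.casesOn N 0 (fun M => (Sq M).max' (hSne M) + 1) with hBnd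
  -- F2 : blocks before N live below Bnd N
  have F2 : ∀ n N, n < N → ∀ j ∈ b.supp (q n), j < Bnd N := by
    intro n N hn j hj
    obtain ⟨M, rfl⟩ : ∃ M, N = M + 1 := ⟨N - 1, by omega⟩
    have hmax : (Sq M).max' (hSne M) ∈ b.supp (q M) :=
      (hmemS M _).1 ((Sq M).max'_mem (hSne M))
    rcases Nat.lt_succ_iff_lt_or_eq.1 hn with h | h
    · exact Nat.lt_succ_of_lt (supp_ord b hq n M h j hj _ hmax)
    · subst h
      exact Nat.lt_succ_of_le ((Sq n).le_max' j ((hmemS n j).2 hj))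
  -- F1 : blocks from N on live at/after Bnd N
  have F1 : ∀ n N, N ≤ n → ∀ j ∈ b.supp (q n), Bnd N ≤ j := by
    intro n N hn j hj
    cases N with
    | zero => exact Nat.zero_le j
    | succ M =>
      have hmax : (Sq M).max' (hSne M) ∈ b.supp (q M) :=
        (hmemS M _).1 ((Sq M).max'_mem (hSne M))
      exact supp_ord b hq M n (by omega) _ hmax j hj
  -- F3 : Bnd → ∞
  have hBge : ∀ N, N ≤ Bnd N := by
    intro N
    cases N with
    | zero => exact le_rfl
    | succ M =>
      have hmax : (Sq M).max' (hSne M) ∈ b.supp (q M) :=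
        (hmemS M _).1 ((Sq M).max'_mem (hSne M))
      have := supp_ge b hq M _ hmax
      simpa [hBnd] using Nat.succ_le_succ this
  have F3 : Filter.Tendsto Bnd atTop atTop :=
    Filter.tendsto_atTop_mono hBge Filter.tendsto_id
  -- the sign sequence at basis level
  set θ' : ℕ → ℝ := fun j => if h : ∃ n, j ∈ b.supp (q n) then θ h.choose else 1 with hθ'def
  have hθ' : IsSigns θ' := by
    intro j
    simp only [hθ'def]
    by_cases h : ∃ n, j ∈ b.supp (q n)
    · rw [dif_pos h]; exact hθ _
    · rw [dif_neg h]; exact Or.inl rfl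
  have hvanc : ∀ (j : ℕ) (n : ℕ), j ∉ b.supp (q n) → b.coord j (s n • q n) = 0 := by
    intro j n hj
    have : b.coord j (q n) = 0 := by
      by_contra hc; exact hj hc
    rw [map_smul, this, smul_zero]
  have ha1 : ∀ n, ∀ j ∈ b.supp (q n), b.coord j σ = s n * b.coord j (q n) := by
    intro n j hj
    have h5 := eval_series (b.coord j) (fun m => s m • q m) σ hσ n
      (fun m hm => hvanc j m (supp_disjoint b hq (Ne.symm hm) j hj))
    simp only [map_smul, smul_eq_mul] at h5
    exact h5
  have ha0 : ∀ j, (∀ n, j ∉ b.supp (q n)) → b.coord j σ = 0 := by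
    intro j hj
    have h5 := eval_series (b.coord j) (fun m => s m • q m) σ hσ 0
      (fun m _ => hvanc j m (hj m))
    rw [hvanc j 0 (hj 0)] at h5
    exact h5
  -- key partial sum identity
  have hkey : ∀ N, ∑ n ∈ Finset.range N, (θ n * s n) • q n
      = ∑ j ∈ Finset.range (Bnd N), (b.coord j σ * θ' j) • b.e j := by
    intro N
    have hq_eq : ∀ n ∈ Finset.range N,
        (θ n * s n) • q n = ∑ j ∈ Finset.range (Bnd N), ((θ n * s n) * b.coord j (q n)) • b.e j := by
      intro n hn
      have hrep : ∑ j ∈ Finset.range (Bnd N), b.coord j (q n) • b.e j = q n := by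
        apply finsupp_eq b (q n) (Sq n)
        · intro j hj
          by_contra hc
          exact hj ((hmemS n j).2 hc)
        · intro j hj
          exact F2 n N (Finset.mem_range.1 hn) j ((hmemS n j).1 hj)
      conv_lhs => rw [← hrep]
      rw [Finset.smul_sum]
      apply Finset.sum_congr rfl
      intro j _
      rw [smul_smul]
    rw [Finset.sum_congr rfl hq_eq, Finset.sum_comm]
    apply Finset.sum_congr rfl
    intro j hj
    rw [← Finset.sum_smul]
    congr 1
    by_cases hex : ∃ n, j ∈ b.supp (q n)
    · set n₀ := hex.choose with hn₀
      have hjn₀ : j ∈ b.supp (q n₀) := hex.choose_spec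
      have hθ'j : θ' j = θ n₀ := by simp only [hθ'def, dif_pos hex]; rfl
      by_cases hlt : n₀ < N
      · have hsum : ∑ n ∈ Finset.range N, θ n * s n * b.coord j (q n)
            = θ n₀ * s n₀ * b.coord j (q n₀) := by
          apply Finset.sum_eq_single_of_mem n₀ (Finset.mem_range.2 hlt)
          intro m _ hm
          have : b.coord j (q m) = 0 := by
            by_contra hc
            exact supp_disjoint b hq hm j (by exact hc) hjn₀
          rw [this, mul_zero]
        rw [hsum, ha1 n₀ j hjn₀, hθ'j]; ring
      · exfalso
        have := F1 n₀ N (by omega) j hjn₀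
        have hjB := Finset.mem_range.1 hj
        omega
    · push_neg at hex
      have hz : ∑ n ∈ Finset.range N, θ n * s n * b.coord j (q n) = 0 := by
        apply Finset.sum_eq_zero
        intro n _
        have : b.coord j (q n) = 0 := by
          by_contra hc; exact hex n hc
        rw [this, mul_zero]
      rw [hz, ha0 j hex, zero_mul]
  -- apply unconditionality
  have hconvE : Converges (fun j => b.coord j σ • b.e j) := ⟨σ, b.expansion σ⟩
  have hconvE' : Converges (fun j => b.coord j σ • (θ' j • b.e j)) :=
    (hu θ' hθ' (fun j => b.coord j σ)).mpr hconvE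
  obtain ⟨σ', hσ'⟩ := hconvE'
  have hσ'' : Filter.Tendsto (fun J => ∑ j ∈ Finset.range J, (b.coord j σ * θ' j) • b.e j)
      atTop (nhds σ') := by
    apply hσ'.congr
    intro J
    apply Finset.sum_congr rfl
    intro j _
    simp only [smul_smul]
  refine ⟨σ', ?_⟩
  have := hσ''.comp F3
  apply this.congr
  intro N
  exact (hkey N).symm
/-- restriction to a subset preserves convergence (for block series) -/
lemma subset_mult {q : ℕ → X} (hq : b.IsBlockSeq q) (hu : b.Unconditional)
    (s : ℕ → ℝ) (A : Set ℕ) (h : Converges fun n => s n • q n) :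
    Converges fun n => (if n ∈ A then s n else 0) • q n := by
  classical
  set θA : ℕ → ℝ := fun n => if n ∈ A then 1 else -1 with hθA
  have hsigns : IsSigns θA := by
    intro n
    by_cases hn : n ∈ A
    · left; simp [hθA, hn]
    · right; simp [hθA, hn]
  have h2 := sign_mult b hq hu s θA hsigns h
  have h3 : Converges fun n => (2:ℝ)⁻¹ • (s n • q n + (θA n * s n) • q n) :=
    Converges.const_smul (Converges.add h h2) _
  apply converges_of_eventually_eq 0 (fun n _ => ?_) h3
  by_cases hn : n ∈ A
  · simp only [hθA, if_pos hn, one_mul, ← add_smul]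
    rw [smul_smul]
    norm_num
    rw [show (1:ℝ)/2 * (s n + s n) = s n by ring]
  · simp only [hθA, if_neg hn, neg_one_mul, ← add_smul]
    simp

/-- the unconditional Cauchy criterion -/
lemma UCC [CompleteSpace X] {q : ℕ → X} (hq : b.IsBlockSeq q) (hu : b.Unconditional)
    (s : ℕ → ℝ) (h : Converges fun n => s n • q n) :
    ∀ ε : ℝ, 0 < ε → ∃ N, ∀ F : Finset ℕ, (∀ n ∈ F, N ≤ n) →
      ‖∑ n ∈ F, s n • q n‖ ≤ ε := by
  classical
  intro ε hε
  by_contra hcon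
  push_neg at hcon
  have hstep : ∀ N, ∃ F : Finset ℕ, (∀ n ∈ F, N ≤ n) ∧ ε < ‖∑ n ∈ F, s n • q n‖ := hcon
  choose Fc hFc1 hFc2 using hstep
  set G : ℕ → Finset ℕ := fun k => Nat.rec (Fc 0) (fun _ prev => Fc ((prev.sup id) + 1)) k with hG
  have hGsucc : ∀ k, G (k+1) = Fc ((G k).sup id + 1) := fun k => rfl
  have hGne : ∀ k, (G k).Nonempty := by
    intro k
    rw [Finset.nonempty_iff_ne_empty]
    intro hemp
    have h2 : ε < ‖∑ n ∈ G k, s n • q n‖ := by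
      cases k with
      | zero => exact hFc2 0
      | succ m => rw [hGsucc m]; exact hFc2 _
    rw [hemp] at h2
    simp at h2
    linarith
  have hGlb : ∀ k, ∀ n ∈ G k, k ≤ n := by
    intro k
    induction k with
    | zero => intro n _; exact Nat.zero_le n
    | succ m ih =>
      intro n hn
      rw [hGsucc m] at hn
      have h1 := hFc1 _ n hn
      obtain ⟨p, hp⟩ := hGne m
      have := ih p hp
      have hps : p ≤ (G m).sup id := Finset.le_sup (f := id) hp
      omega
  have hGsep : ∀ k l, k < l → ∀ n ∈ G k, ∀ m ∈ G l, n < m := by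
    intro k l
    induction l with
    | zero => omega
    | succ j ih =>
      intro hkl n hn m hm
      rw [hGsucc j] at hm
      have hmge := hFc1 _ m hm
      rcases Nat.lt_succ_iff_lt_or_eq.1 hkl with h' | h'
      · obtain ⟨p, hp⟩ := hGne j
        have h1 := ih h' n hn p hp
        have hps : p ≤ (G j).sup id := Finset.le_sup (f := id) hp
        omega
      · subst h'
        have hns : n ≤ (G k).sup id := Finset.le_sup (f := id) hn
        omega
  set A : Set ℕ := {n | ∃ k, n ∈ G k} with hA
  set s' : ℕ → ℝ := fun n => if n ∈ A then s n else 0 with hs'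
  have hconv' : Converges fun n => s' n • q n := subset_mult b hq hu s A h
  obtain ⟨σ', hσ'⟩ := hconv'
  have hcauchy : CauchySeq (fun N => ∑ n ∈ Finset.range N, s' n • q n) := hσ'.cauchySeq
  rw [Metric.cauchySeq_iff] at hcauchy
  obtain ⟨M, hM⟩ := hcauchy ε hε
  set u := (G M).min' (hGne M) with hu'
  set v := (G M).max' (hGne M) + 1 with hv'
  have huM : M ≤ u := hGlb M u ((G M).min'_mem (hGne M))
  have huv : u ≤ v := by
    have := (G M).min'_le _ ((G M).max'_mem (hGne M))
    omega
  have hchunk : (∑ n ∈ Finset.range v, s' n • q n) - (∑ n ∈ Finset.range u, s' n • q n)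
      = ∑ n ∈ G M, s n • q n := by
    rw [← Finset.sum_range_add_sum_Ico _ huv]
    have h1 : ∑ n ∈ Finset.Ico u v, s' n • q n = ∑ n ∈ G M, s n • q n := by
      rw [← Finset.sum_subset (s₁ := G M) (s₂ := Finset.Ico u v) ?_ ?_]
      · apply Finset.sum_congr rfl
        intro n hn
        have : n ∈ A := ⟨M, hn⟩
        simp [hs', this]
      · intro n hn
        rw [Finset.mem_Ico]
        constructor
        · exact (G M).min'_le n hn
        · have := (G M).le_max' n hn; omega
      · intro n hnIco hnG
        suffices hns : s' n = 0 by rw [hns, zero_smul]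
        rw [hs']
        simp only
        rw [if_neg]
        intro hnA
        obtain ⟨j, hj⟩ := hnA
        rcases lt_trichotomy j M with h' | h' | h'
        · have := hGsep j M h' n hj u ((G M).min'_mem (hGne M))
          have := (Finset.mem_Ico.1 hnIco).1
          omega
        · subst h'; exact hnG hj
        · have := hGsep M j h' _ ((G M).max'_mem (hGne M)) n hj
          have := (Finset.mem_Ico.1 hnIco).2
          omega
    rw [← h1]; abel
  have hd := hM v (by omega) u (by omega)
  rw [dist_eq_norm, hchunk] at hd
  have h2 : ε < ‖∑ n ∈ G M, s n • q n‖ := by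
    cases M with
    | zero => exact hFc2 0
    | succ m => rw [hGsucc m]; exact hFc2 _
  linarith
/-- extreme point / convexity: a multiplied sum is dominated by some signed sum -/
lemma cvx (F : Finset ℕ) (v : ℕ → X) (r : ℕ → ℝ) (hr : ∀ n, |r n| ≤ 1) (w : X) :
    ∃ θ : ℕ → ℝ, IsSigns θ ∧ ‖w + ∑ n ∈ F, r n • v n‖ ≤ ‖w + ∑ n ∈ F, θ n • v n‖ := by
  classical
  induction F using Finset.induction_on generalizing w with
  | empty => exact ⟨fun _ => 1, fun _ => Or.inl rfl, le_refl _⟩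
  | @insert a F ha ih =>
    obtain ⟨θ, hθ, hle⟩ := ih (w + r a • v a)
    rw [Finset.sum_insert ha, ← add_assoc]
    set w'' := w + ∑ n ∈ F, θ n • v n with hw''
    have hle2 : ‖w + r a • v a + ∑ n ∈ F, r n • v n‖ ≤ ‖w'' + r a • v a‖ := by
      calc ‖w + r a • v a + ∑ n ∈ F, r n • v n‖ ≤ ‖w + r a • v a + ∑ n ∈ F, θ n • v n‖ := hle
        _ = ‖w'' + r a • v a‖ := by rw [hw'']; congr 1; abel
    have habs := hr a
    rw [abs_le] at habs
    have hconv : ‖w'' + r a • v a‖ ≤ max ‖w'' + v a‖ ‖w'' + (-1 : ℝ) • v a‖ := by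
      have hdecomp : w'' + r a • v a
          = ((1 + r a)/2) • (w'' + v a) + ((1 - r a)/2) • (w'' + (-1 : ℝ) • v a) := by
        module
      rw [hdecomp]
      calc ‖((1 + r a)/2) • (w'' + v a) + ((1 - r a)/2) • (w'' + (-1:ℝ) • v a)‖
          ≤ ‖((1 + r a)/2) • (w'' + v a)‖ + ‖((1 - r a)/2) • (w'' + (-1:ℝ) • v a)‖ :=
            norm_add_le _ _
        _ = ((1 + r a)/2) * ‖w'' + v a‖ + ((1 - r a)/2) * ‖w'' + (-1:ℝ) • v a‖ := by
            rw [norm_smul, norm_smul, Real.norm_eq_abs, Real.norm_eq_abs,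
              abs_of_nonneg (by linarith), abs_of_nonneg (by linarith)]
        _ ≤ ((1 + r a)/2) * max ‖w'' + v a‖ ‖w'' + (-1:ℝ) • v a‖
            + ((1 - r a)/2) * max ‖w'' + v a‖ ‖w'' + (-1:ℝ) • v a‖ := by
            apply add_le_add
            · exact mul_le_mul_of_nonneg_left (le_max_left _ _) (by linarith)
            · exact mul_le_mul_of_nonneg_left (le_max_right _ _) (by linarith)
        _ = max ‖w'' + v a‖ ‖w'' + (-1:ℝ) • v a‖ := by ring
    rcases max_cases ‖w'' + v a‖ ‖w'' + (-1:ℝ) • v a‖ with ⟨hmax, _⟩ | ⟨hmax, _⟩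
    · refine ⟨Function.update θ a 1, ?_, ?_⟩
      · intro n
        by_cases hn : n = a
        · subst hn; left; simp [Function.update_self]
        · rw [Function.update_of_ne hn]; exact hθ n
      · rw [Finset.sum_insert ha, Function.update_self]
        have hFsum : ∑ n ∈ F, Function.update θ a 1 n • v n = ∑ n ∈ F, θ n • v n := by
          apply Finset.sum_congr rfl
          intro n hn
          rw [Function.update_of_ne (fun h => ha (by rw [← h]; exact hn))]
        rw [hFsum]
        calc ‖w + r a • v a + ∑ n ∈ F, r n • v n‖ ≤ ‖w'' + r a • v a‖ := hle2
          _ ≤ ‖w'' + v a‖ := hconv.trans (le_of_eq hmax)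
          _ = ‖w + ((1:ℝ) • v a + ∑ n ∈ F, θ n • v n)‖ := by
              rw [hw'', one_smul]; congr 1; abel
    · refine ⟨Function.update θ a (-1), ?_, ?_⟩
      · intro n
        by_cases hn : n = a
        · subst hn; right; simp [Function.update_self]
        · rw [Function.update_of_ne hn]; exact hθ n
      · rw [Finset.sum_insert ha, Function.update_self]
        have hFsum : ∑ n ∈ F, Function.update θ a (-1) n • v n = ∑ n ∈ F, θ n • v n := by
          apply Finset.sum_congr rfl
          intro n hn
          rw [Function.update_of_ne (fun h => ha (by rw [← h]; exact hn))]
        rw [hFsum]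
        calc ‖w + r a • v a + ∑ n ∈ F, r n • v n‖ ≤ ‖w'' + r a • v a‖ := hle2
          _ ≤ ‖w'' + (-1:ℝ) • v a‖ := hconv.trans (le_of_eq hmax)
          _ = ‖w + ((-1:ℝ) • v a + ∑ n ∈ F, θ n • v n)‖ := by
              rw [hw'']; congr 1; abel
/-- bounded multiplier theorem for block series -/
lemma mult [CompleteSpace X] {q : ℕ → X} (hq : b.IsBlockSeq q) (hu : b.Unconditional)
    (u r : ℕ → ℝ) (hr : ∀ n, |r n| ≤ 1)
    (h : Converges fun n => u n • q n) : Converges fun n => (r n * u n) • q n := by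
  rw [converges_iff_cauchy]
  rw [Metric.cauchySeq_iff']
  intro ε hε
  obtain ⟨N, hN⟩ := UCC b hq hu u h (ε/4) (by linarith)
  refine ⟨N, ?_⟩
  intro m hm
  rw [dist_eq_norm, PS_sub _ hm]
  obtain ⟨θ, hθ, hle⟩ := cvx (Finset.Ico N m) (fun n => u n • q n) r hr 0
  simp only [zero_add] at hle
  have hstep1 : ‖∑ n ∈ Finset.Ico N m, (r n * u n) • q n‖
      ≤ ‖∑ n ∈ Finset.Ico N m, θ n • (u n • q n)‖ := by
    have : ∀ n, (r n * u n) • q n = r n • (u n • q n) := fun n => by rw [smul_smul]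
    calc ‖∑ n ∈ Finset.Ico N m, (r n * u n) • q n‖
        = ‖∑ n ∈ Finset.Ico N m, r n • (u n • q n)‖ := by
          congr 1; exact Finset.sum_congr rfl (fun n _ => this n)
      _ ≤ _ := hle
  -- split by sign
  set Fp := (Finset.Ico N m).filter (fun n => θ n = 1) with hFp
  set Fm := (Finset.Ico N m).filter (fun n => ¬ (θ n = 1)) with hFm
  have hsplit : ∑ n ∈ Finset.Ico N m, θ n • (u n • q n)
      = (∑ n ∈ Fp, u n • q n) - ∑ n ∈ Fm, u n • q n := by
    rw [hFp, hFm, sub_eq_add_neg, ← Finset.sum_neg_distrib,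
      ← Finset.sum_filter_add_sum_filter_not (Finset.Ico N m) (fun n => θ n = 1)]
    congr 1
    · exact Finset.sum_congr rfl (fun n hn => by
        rw [(Finset.mem_filter.1 hn).2, one_smul])
    · exact Finset.sum_congr rfl (fun n hn => by
        have h1 : θ n = -1 := (hθ n).resolve_left (Finset.mem_filter.1 hn).2
        rw [h1, neg_one_smul])
  have hbound : ‖∑ n ∈ Finset.Ico N m, θ n • (u n • q n)‖ ≤ ε/4 + ε/4 := by
    rw [hsplit]
    apply (norm_sub_le _ _).trans
    apply add_le_add
    · exact hN Fp (fun n hn => (Finset.mem_Ico.1 (Finset.mem_filter.1 hn).1).1)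
    · exact hN Fm (fun n hn => (Finset.mem_Ico.1 (Finset.mem_filter.1 hn).1).1)
  calc ‖∑ n ∈ Finset.Ico N m, (r n * u n) • q n‖ ≤ ε/4 + ε/4 := hstep1.trans hbound
    _ < ε := by linarith
/-- the transfer lemma: small multiples of `q` converge when the `p`-series converges -/
lemma transfer [CompleteSpace X] (hu : b.Unconditional)
    (hcompl : ∀ x : ℕ → X, b.IsBlockSeq x →
      ∃ (f : ℕ → X →L[ℝ] ℝ) (P : X →L[ℝ] X),
        (∀ n, ∀ m, m ∉ b.supp (x n) → f n (b.e m) = 0) ∧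
        (∀ z : X, Filter.Tendsto (fun N => ∑ n ∈ Finset.range N, f n z • x n)
          Filter.atTop (nhds (P z))) ∧
        (∀ n, P (x n) = x n))
    (p q : ℕ → X) (hp : b.IsBlockSeq p) (hq : b.IsBlockSeq q)
    (U : ℕ → Set ℕ) (hpU : ∀ n, b.supp (p n) ⊆ U n) (hqU : ∀ n, b.supp (q n) ⊆ U n)
    (hUord : ∀ n, ∀ i ∈ U n, ∀ j ∈ U (n+1), i < j)
    (hdisj : ∀ n, ∀ j ∈ b.supp (p n), j ∉ b.supp (q n))
    (t : ℕ → ℝ) (ht0 : ∀ n, 0 ≤ t n) (ht1 : ∀ n, t n ≤ 1/2)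
    (htlim : Filter.Tendsto t atTop (nhds 0))
    (bc : ℕ → ℝ) (hconv : Converges fun n => bc n • p n) :
    Converges fun n => (bc n * t n) • q n := by
  classical
  -- U's are pairwise ordered
  have hUord2 : ∀ m n, m < n → ∀ i ∈ U m, ∀ j ∈ U n, i < j := by
    intro m n
    induction n with
    | zero => omega
    | succ n ih =>
      intro hlt i hi j hj
      rcases Nat.lt_succ_iff_lt_or_eq.1 hlt with h | h
      · obtain ⟨k, hk⟩ := supp_nonempty b hp n
        exact lt_trans (ih h i hi k (hpU n hk)) (hUord n k (hpU n hk) j hj)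
      · subst h; exact hUord m i hi j hj
  have hUdisj : ∀ m n, m ≠ n → ∀ j ∈ U m, j ∉ U n := by
    intro m n hmn j hjm hjn
    rcases Nat.lt_or_ge m n with h | h
    · exact lt_irrefl j (hUord2 m n h j hjm j hjn)
    · exact lt_irrefl j (hUord2 n m (by omega) j hjn j hjm)
  -- the combined blocks
  set c : ℕ → ℝ := fun n => ‖p n + t n • q n‖ with hc
  have htq : ∀ n, ‖t n • q n‖ = t n := by
    intro n
    rw [norm_smul, Real.norm_eq_abs, abs_of_nonneg (ht0 n), hq.1 n, mul_one]
  have hc_lb : ∀ n, 1/2 ≤ c n := by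
    intro n
    have h1 : ‖p n‖ ≤ ‖p n + t n • q n‖ + ‖t n • q n‖ := by
      calc ‖p n‖ = ‖(p n + t n • q n) + (-(t n • q n))‖ := by congr 1; abel
        _ ≤ _ := by rw [← norm_neg (t n • q n)] ; exact norm_add_le _ _
    rw [hp.1 n, htq n] at h1
    have := ht1 n
    simp only [hc]
    linarith
  have hcpos : ∀ n, 0 < c n := fun n => lt_of_lt_of_le (by norm_num) (hc_lb n)
  have hc_ub : ∀ n, c n ≤ 3/2 := by
    intro n
    have h1 : c n ≤ ‖p n‖ + ‖t n • q n‖ := norm_add_le _ _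
    rw [hp.1 n, htq n] at h1
    have := ht1 n
    linarith
  set w : ℕ → X := fun n => (c n)⁻¹ • (p n + t n • q n) with hw
  have hcw : ∀ n, c n • w n = p n + t n • q n := by
    intro n
    rw [hw]
    exact smul_inv_smul₀ (ne_of_gt (hcpos n)) _
  -- support of w
  have hsuppw : ∀ n, b.supp (w n) ⊆ b.supp (p n) ∪ b.supp (q n) := by
    intro n j hj
    by_contra hcon
    rw [Set.mem_union] at hcon
    push_neg at hcon
    have h1 : b.coord j (p n) = 0 := by
      by_contra hcc; exact hcon.1 hcc
    have h2 : b.coord j (q n) = 0 := by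
      by_contra hcc; exact hcon.2 hcc
    have : b.coord j (w n) = 0 := by
      rw [hw]
      simp only [map_smul, map_add, h1, h2, smul_zero, add_zero, smul_eq_mul, mul_zero, zero_add]
    exact hj this
  have hsuppwU : ∀ n, b.supp (w n) ⊆ U n := by
    intro n j hj
    rcases hsuppw n hj with h | h
    · exact hpU n h
    · exact hqU n h
  have hwblock : b.IsBlockSeq w := by
    refine ⟨?_, ?_, ?_⟩
    · intro n
      rw [hw]
      simp only
      rw [norm_smul, Real.norm_eq_abs, abs_of_pos (inv_pos.2 (hcpos n))]
      rw [show ‖p n + t n • q n‖ = c n from rfl]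
      exact inv_mul_cancel₀ (ne_of_gt (hcpos n))
    · intro n
      exact Set.Finite.subset ((hp.2.1 n).union (hq.2.1 n)) (hsuppw n)
    · intro n i hi j hj
      exact hUord n i (hsuppwU n hi) j (hsuppwU (n+1) hj)
  obtain ⟨f, P, hfsupp, hfser, hffix⟩ := hcompl w hwblock
  obtain ⟨g, Q, hgsupp, hgser, hgfix⟩ := hcompl q hq
  -- uniform bound on f via Banach–Steinhaus
  set T : ℕ → X →L[ℝ] X := fun N => ∑ n ∈ Finset.range N, (f n).smulRight (w n) with hT
  have hTapp : ∀ N z, T N z = ∑ n ∈ Finset.range N, f n z • w n := by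
    intro N z
    rw [hT]
    simp [ContinuousLinearMap.sum_apply, ContinuousLinearMap.smulRight_apply]
  have hpb : ∀ z : X, ∃ C, ∀ N, ‖T N z‖ ≤ C := by
    intro z
    have h1 : Filter.Tendsto (fun N => ‖T N z‖) atTop (nhds ‖P z‖) := by
      have := (hfser z).norm
      apply this.congr
      intro N
      rw [hTapp]
    have h2 : BddAbove (Set.range fun N => ‖T N z‖) := h1.bddAbove_range
    obtain ⟨C, hC⟩ := h2
    exact ⟨C, fun N => hC (Set.mem_range_self N)⟩
  obtain ⟨C', hC'⟩ := banach_steinhaus hpb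
  have hC'0 : 0 ≤ C' := le_trans (norm_nonneg (T 0)) (hC' 0)
  have hfb : ∀ n (z : X), |f n z| ≤ 2 * C' * ‖z‖ := by
    intro n z
    have h1 : f n z • w n = T (n+1) z - T n z := by
      rw [hTapp, hTapp, Finset.sum_range_succ]
      abel
    have h2 : ‖f n z • w n‖ = |f n z| := by
      rw [norm_smul, Real.norm_eq_abs, hwblock.1 n, mul_one]
    rw [← h2, h1]
    calc ‖T (n+1) z - T n z‖ ≤ ‖T (n+1) z‖ + ‖T n z‖ := norm_sub_le _ _
      _ ≤ C' * ‖z‖ + C' * ‖z‖ := add_le_add ((T (n+1)).le_of_opNorm_le (hC' _) z)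
          ((T n).le_of_opNorm_le (hC' _) z)
      _ = 2 * C' * ‖z‖ := by ring
  -- biorthogonality
  have hfw := biorth_block b hwblock f P hfsupp hfser hffix
  have hgq := biorth_block b hq g Q hgsupp hgser hgfix
  -- pairing identity
  set lam : ℕ → ℝ := fun n => f n (p n) with hlam
  have hpair : ∀ n, lam n + t n * f n (q n) = c n := by
    intro n
    have h1 : f n (c n • w n) = c n := by
      rw [map_smul, hfw n n, if_pos rfl, smul_eq_mul, mul_one]
    rw [hcw n] at h1
    rw [map_add, map_smul, smul_eq_mul] at h1
    exact h1
  -- eventually lam is large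
  have hfqb : ∀ n, |f n (q n)| ≤ 2 * C' := by
    intro n
    have := hfb n (q n)
    rw [hq.1 n, mul_one] at this
    exact this
  obtain ⟨N₀, hN₀⟩ : ∃ N₀, ∀ n, N₀ ≤ n → t n * (2 * C') ≤ 1/4 := by
    have hδ : (0:ℝ) < 1/(8 * (C' + 1)) := by positivity
    have := (htlim.eventually (Metric.ball_mem_nhds (0:ℝ) hδ)).exists_forall_of_atTop
    obtain ⟨N₀, hN₀⟩ := ((Filter.tendsto_atTop'.1 htlim) (Metric.ball 0 (1/(8 * (C' + 1)))) (Metric.ball_mem_nhds _ hδ))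
    refine ⟨N₀, ?_⟩
    intro n hn
    have h1 := hN₀ n hn
    rw [Metric.mem_ball, Real.dist_eq, sub_zero, abs_of_nonneg (ht0 n)] at h1
    have h2 : t n * (2 * C') ≤ (1/(8 * (C' + 1))) * (2 * C') := by
      apply mul_le_mul_of_nonneg_right (le_of_lt h1) (by positivity)
    calc t n * (2 * C') ≤ (1/(8 * (C' + 1))) * (2 * C') := h2
      _ ≤ 1/4 := by
        rw [div_mul_eq_mul_div, one_mul, div_le_div_iff₀ (by positivity) (by norm_num)]
        nlinarith
  have hlam_lb : ∀ n, N₀ ≤ n → 1/4 ≤ lam n := by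
    intro n hn
    have h1 := hpair n
    have h2 : |t n * f n (q n)| ≤ 1/4 := by
      rw [abs_mul, abs_of_nonneg (ht0 n)]
      calc t n * |f n (q n)| ≤ t n * (2 * C') :=
            mul_le_mul_of_nonneg_left (hfqb n) (ht0 n)
        _ ≤ 1/4 := hN₀ n hn
    have h3 := hc_lb n
    rw [abs_le] at h2
    linarith
  -- evaluate f at the sum s
  obtain ⟨s, hs⟩ := hconv
  have hfs : ∀ n, f n s = bc n * lam n := by
    intro n
    have hvan : ∀ m, m ≠ n → f n (bc m • p m) = 0 := by
      intro m hm
      rw [map_smul, smul_eq_mul]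
      have : f n (p m) = 0 := by
        apply eval_zero b (f n) (b.supp (w n)) (hfsupp n) (p m) (hp.2.1 m)
        intro j hj hjw
        exact hUdisj m n hm j (hpU m hj) (hsuppwU n hjw)
      rw [this, mul_zero]
    have := eval_series (f n) (fun m => bc m • p m) s hs n hvan
    rw [this, map_smul, smul_eq_mul, hlam]
  -- the w-series converges
  have hσ : Filter.Tendsto (fun N => ∑ n ∈ Finset.range N, (bc n * lam n) • w n)
      atTop (nhds (P s)) := by
    apply (hfser s).congr
    intro N
    apply Finset.sum_congr rfl
    intro n _
    rw [hfs n]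
  -- evaluate g at σ := P s
  have hgσ : ∀ n, g n (P s) = bc n * lam n * (t n * (c n)⁻¹) := by
    intro n
    have hvan : ∀ m, m ≠ n → g n ((bc m * lam m) • w m) = 0 := by
      intro m hm
      rw [map_smul, smul_eq_mul]
      have : g n (w m) = 0 := by
        apply eval_zero b (g n) (b.supp (q n)) (hgsupp n) (w m)
          (Set.Finite.subset ((hp.2.1 m).union (hq.2.1 m)) (hsuppw m))
        intro j hj hjq
        exact hUdisj m n hm j (hsuppwU m hj) (hqU n hjq)
      rw [this, mul_zero]
    have h1 := eval_series (g n) (fun m => (bc m * lam m) • w m) (P s) hσ n hvan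
    rw [h1, map_smul, smul_eq_mul]
    have hgw : g n (w n) = t n * (c n)⁻¹ := by
      have h2 : g n (c n • w n) = t n := by
        rw [hcw n, map_add, map_smul, smul_eq_mul, hgq n n, if_pos rfl, mul_one]
        have : g n (p n) = 0 := by
          apply eval_zero b (g n) (b.supp (q n)) (hgsupp n) (p n) (hp.2.1 n)
          intro j hj
          exact hdisj n j hj
        rw [this, zero_add]
      rw [map_smul, smul_eq_mul] at h2
      rw [show t n * (c n)⁻¹ = t n / c n by rw [div_eq_mul_inv]]
      rw [eq_div_iff (ne_of_gt (hcpos n))]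
      linarith [h2]
    rw [hgw]
  -- the transferred series converges
  have hconv3 : Converges fun n => (bc n * lam n * (t n * (c n)⁻¹)) • q n := by
    refine ⟨Q (P s), ?_⟩
    apply (hgser (P s)).congr
    intro N
    apply Finset.sum_congr rfl
    intro n _
    rw [hgσ n]
  -- multiplier to remove lam/c
  set r : ℕ → ℝ := fun n => if N₀ ≤ n then c n / (6 * lam n) else 0 with hr
  have hrb : ∀ n, |r n| ≤ 1 := by
    intro n
    simp only [hr]
    by_cases hn : N₀ ≤ n
    · rw [if_pos hn]
      have h1 := hlam_lb n hn
      have h2 := hc_ub n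
      have h3 := hcpos n
      rw [abs_of_nonneg (by positivity)]
      rw [div_le_one (by linarith)]
      linarith
    · rw [if_neg hn]; norm_num
  have hconv4 := mult b hq hu _ r hrb hconv3
  -- clean up
  have hconv5 : Converges fun n => (6:ℝ) • ((r n * (bc n * lam n * (t n * (c n)⁻¹))) • q n) :=
    Converges.const_smul hconv4 6
  apply converges_of_eventually_eq N₀ ?_ hconv5
  intro n hn
  rw [smul_smul]
  congr 1
  simp only [hr, if_pos hn]
  have h1 := hlam_lb n hn
  have h2 := hcpos n
  field_simp
/-- partial sums of the transferred series are bounded -/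
lemma bounded_partials [CompleteSpace X] (hu : b.Unconditional)
    (hcompl : ∀ x : ℕ → X, b.IsBlockSeq x →
      ∃ (f : ℕ → X →L[ℝ] ℝ) (P : X →L[ℝ] X),
        (∀ n, ∀ m, m ∉ b.supp (x n) → f n (b.e m) = 0) ∧
        (∀ z : X, Filter.Tendsto (fun N => ∑ n ∈ Finset.range N, f n z • x n)
          Filter.atTop (nhds (P z))) ∧
        (∀ n, P (x n) = x n))
    (p q : ℕ → X) (hp : b.IsBlockSeq p) (hq : b.IsBlockSeq q)
    (U : ℕ → Set ℕ) (hpU : ∀ n, b.supp (p n) ⊆ U n) (hqU : ∀ n, b.supp (q n) ⊆ U n)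
    (hUord : ∀ n, ∀ i ∈ U n, ∀ j ∈ U (n+1), i < j)
    (hdisj : ∀ n, ∀ j ∈ b.supp (p n), j ∉ b.supp (q n))
    (bc : ℕ → ℝ) (hconv : Converges fun n => bc n • p n) :
    ∃ C, ∀ N, ‖∑ n ∈ Finset.range N, bc n • q n‖ ≤ C := by
  classical
  by_contra hcon
  push_neg at hcon
  set PSq : ℕ → X := fun N => ∑ n ∈ Finset.range N, bc n • q n with hPSq
  -- an unbounded subsequence
  have claim : ∀ (m : ℕ) (D : ℝ), ∃ N, m < N ∧ D < ‖PSq N‖ := by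
    intro m D
    set C := max D (((Finset.range (m+1)).image (fun M => ‖PSq M‖)).max' (by
      apply Finset.Nonempty.image
      exact ⟨0, Finset.mem_range.2 (Nat.succ_pos m)⟩)) with hC
    obtain ⟨N, hN⟩ := hcon C
    refine ⟨N, ?_, ?_⟩
    · by_contra hc
      push_neg at hc
      have h1 : ‖PSq N‖ ≤ C := by
        apply le_max_of_le_right
        apply Finset.le_max'
        exact Finset.mem_image_of_mem _ (Finset.mem_range.2 (by omega))
      linarith
    · exact lt_of_le_of_lt (le_max_left _ _) hN
  -- recursive construction
  set NN : ℕ → ℕ := fun k => Nat.rec 0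
    (fun k' prev => (claim prev ((4:ℝ)^(k'+1) + ‖PSq prev‖)).choose) k with hNN
  have hNNsucc : ∀ k, NN (k+1) = (claim (NN k) ((4:ℝ)^(k+1) + ‖PSq (NN k)‖)).choose :=
    fun k => rfl
  have hNNlt : ∀ k, NN k < NN (k+1) := by
    intro k
    rw [hNNsucc k]
    exact (claim (NN k) ((4:ℝ)^(k+1) + ‖PSq (NN k)‖)).choose_spec.1
  have hNNnorm : ∀ k, (4:ℝ)^(k+1) + ‖PSq (NN k)‖ < ‖PSq (NN (k+1))‖ := by
    intro k
    rw [hNNsucc k]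
    exact (claim (NN k) ((4:ℝ)^(k+1) + ‖PSq (NN k)‖)).choose_spec.2
  have hNNmono : StrictMono NN := strictMono_nat_of_lt_succ hNNlt
  have hNN0 : NN 0 = 0 := rfl
  have hNNge : ∀ k, k ≤ NN k := fun k => hNNmono.le_apply
  -- the weights
  set K : ℕ → ℕ := fun n => ((Finset.range (n+1)).filter (fun j => NN j ≤ n)).card with hK
  set t : ℕ → ℝ := fun n => (1/2 : ℝ)^(K n) with ht
  have hKpos : ∀ n, 1 ≤ K n := by
    intro n
    rw [hK]
    apply Finset.card_pos.2
    refine ⟨0, ?_⟩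
    rw [Finset.mem_filter]
    exact ⟨Finset.mem_range.2 (Nat.succ_pos n), by rw [hNN0]; exact Nat.zero_le n⟩
  have ht0 : ∀ n, 0 < t n := fun n => pow_pos (by norm_num) _
  have ht1 : ∀ n, t n ≤ 1/2 := by
    intro n
    rw [ht]
    calc ((1:ℝ)/2)^(K n) ≤ (1/2)^1 :=
      pow_le_pow_of_le_one (by norm_num) (by norm_num) (hKpos n)
      _ = 1/2 := pow_one _
  have hKge : ∀ k n, NN k ≤ n → k + 1 ≤ K n := by
    intro k n hn
    rw [hK]
    have hsub : Finset.range (k+1) ⊆ (Finset.range (n+1)).filter (fun j => NN j ≤ n) := by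
      intro j hj
      rw [Finset.mem_range] at hj
      rw [Finset.mem_filter, Finset.mem_range]
      have h1 : NN j ≤ NN k := hNNmono.monotone (by omega)
      exact ⟨by have := hNNge j; omega, le_trans h1 hn⟩
    calc k + 1 = (Finset.range (k+1)).card := (Finset.card_range _).symm
      _ ≤ _ := Finset.card_le_card hsub
  have htlim : Filter.Tendsto t atTop (nhds 0) := by
    rw [Metric.tendsto_atTop]
    intro ε hε
    obtain ⟨k, hk⟩ := exists_pow_lt_of_lt_one hε (show (1:ℝ)/2 < 1 by norm_num)
    refine ⟨NN k, ?_⟩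
    intro n hn
    rw [Real.dist_eq, sub_zero, abs_of_pos (ht0 n)]
    calc t n = (1/2:ℝ)^(K n) := rfl
      _ ≤ (1/2:ℝ)^k := pow_le_pow_of_le_one (by norm_num) (by norm_num)
          (by have := hKge k n hn; omega)
      _ < ε := hk
  have hKconst : ∀ k n, NN k ≤ n → n < NN (k+1) → K n = k + 1 := by
    intro k n h1 h2
    simp only [hK]
    have : (Finset.range (n+1)).filter (fun j => NN j ≤ n) = Finset.range (k+1) := by
      ext j
      rw [Finset.mem_filter, Finset.mem_range, Finset.mem_range]
      constructor
      · rintro ⟨_, hj2⟩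
        by_contra hc
        push_neg at hc
        have : NN (k+1) ≤ NN j := hNNmono.monotone hc
        omega
      · intro hj
        have hNNj : NN j ≤ NN k := hNNmono.monotone (by omega)
        exact ⟨by have := hNNge j; omega, by omega⟩
    rw [this, Finset.card_range]
  -- transfer
  have hconv2 := transfer b hu hcompl p q hp hq U hpU hqU hUord hdisj t
    (fun n => le_of_lt (ht0 n)) ht1 htlim bc hconv
  obtain ⟨σ, hσ⟩ := hconv2
  have hcauchy : CauchySeq (fun N => ∑ n ∈ Finset.range N, (bc n * t n) • q n) := hσ.cauchySeq
  rw [Metric.cauchySeq_iff] at hcauchy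
  obtain ⟨M, hM⟩ := hcauchy 2 (by norm_num)
  -- the contradiction
  set k := M with hk
  have hd := hM (NN (k+1)) (le_trans (hNNge M) (le_of_lt (hNNmono (Nat.lt_succ_self M))))
    (NN k) (hNNge M)
  rw [dist_eq_norm] at hd
  have hchunk : (∑ n ∈ Finset.range (NN (k+1)), (bc n * t n) • q n)
      - (∑ n ∈ Finset.range (NN k), (bc n * t n) • q n)
      = ((1/2:ℝ)^(k+1)) • (PSq (NN (k+1)) - PSq (NN k)) := by
    have hle := le_of_lt (hNNlt k)
    have h1 : ∀ n ∈ Finset.Ico (NN k) (NN (k+1)),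
        (bc n * t n) • q n = ((1/2:ℝ)^(k+1)) • (bc n • q n) := by
      intro n hn
      rw [Finset.mem_Ico] at hn
      rw [smul_smul]
      congr 1
      simp only [ht]
      rw [hKconst k n hn.1 hn.2]
      ring
    have e1 : (∑ n ∈ Finset.range (NN (k+1)), (bc n * t n) • q n)
        - (∑ n ∈ Finset.range (NN k), (bc n * t n) • q n)
        = ∑ n ∈ Finset.Ico (NN k) (NN (k+1)), (bc n * t n) • q n := by
      rw [← Finset.sum_range_add_sum_Ico (fun n => (bc n * t n) • q n) hle]
      abel
    have e2 : PSq (NN (k+1)) - PSq (NN k) = ∑ n ∈ Finset.Ico (NN k) (NN (k+1)), bc n • q n := by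
      simp only [hPSq]
      rw [← Finset.sum_range_add_sum_Ico (fun n => bc n • q n) hle]
      abel
    rw [e1, e2, Finset.smul_sum]
    exact Finset.sum_congr rfl h1
  rw [hchunk] at hd
  have h2 : ‖((1/2:ℝ)^(k+1)) • (PSq (NN (k+1)) - PSq (NN k))‖
      = (1/2:ℝ)^(k+1) * ‖PSq (NN (k+1)) - PSq (NN k)‖ := by
    rw [norm_smul, Real.norm_eq_abs, abs_of_pos (pow_pos (by norm_num) _)]
  have h3 : (4:ℝ)^(k+1) ≤ ‖PSq (NN (k+1)) - PSq (NN k)‖ := by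
    have := hNNnorm k
    have h4 : ‖PSq (NN (k+1))‖ - ‖PSq (NN k)‖ ≤ ‖PSq (NN (k+1)) - PSq (NN k)‖ :=
      norm_sub_norm_le _ _
    linarith
  have h5 : (2:ℝ) ≤ (1/2:ℝ)^(k+1) * ‖PSq (NN (k+1)) - PSq (NN k)‖ := by
    calc (2:ℝ) ≤ 2^(k+1) := by
          calc (2:ℝ) = 2^1 := (pow_one 2).symm
            _ ≤ 2^(k+1) := pow_le_pow_right₀ (by norm_num) (by omega)
      _ = (1/2:ℝ)^(k+1) * 4^(k+1) := by
          rw [← mul_pow]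
          norm_num
      _ ≤ _ := mul_le_mul_of_nonneg_left h3 (le_of_lt (pow_pos (by norm_num) _))
  rw [h2] at hd
  linarith
/-- one direction of the equivalence -/
lemma dir [CompleteSpace X] (hu : b.Unconditional)
    (hcompl : ∀ x : ℕ → X, b.IsBlockSeq x →
      ∃ (f : ℕ → X →L[ℝ] ℝ) (P : X →L[ℝ] X),
        (∀ n, ∀ m, m ∉ b.supp (x n) → f n (b.e m) = 0) ∧
        (∀ z : X, Filter.Tendsto (fun N => ∑ n ∈ Finset.range N, f n z • x n)
          Filter.atTop (nhds (P z))) ∧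
        (∀ n, P (x n) = x n))
    (p q : ℕ → X) (hp : b.IsBlockSeq p) (hq : b.IsBlockSeq q)
    (U : ℕ → Set ℕ) (hpU : ∀ n, b.supp (p n) ⊆ U n) (hqU : ∀ n, b.supp (q n) ⊆ U n)
    (hUord : ∀ n, ∀ i ∈ U n, ∀ j ∈ U (n+1), i < j)
    (hdisj : ∀ n, ∀ j ∈ b.supp (p n), j ∉ b.supp (q n))
    (a : ℕ → ℝ) (ha : Converges fun n => a n • p n) :
    Converges fun n => a n • q n := by
  classical
  obtain ⟨f, P, hfsupp, hfser, hffix⟩ := hcompl p hp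
  have hbiorth := biorth_block b hp f P hfsupp hfser hffix
  -- the maps Ψ_N
  set Ψ : ℕ → X →L[ℝ] X := fun N => ∑ n ∈ Finset.range N, (f n).smulRight (q n) with hΨ
  have hΨapp : ∀ N z, Ψ N z = ∑ n ∈ Finset.range N, f n z • q n := by
    intro N z
    simp [hΨ, ContinuousLinearMap.sum_apply, ContinuousLinearMap.smulRight_apply]
  have hpb : ∀ z : X, ∃ C, ∀ N, ‖Ψ N z‖ ≤ C := by
    intro z
    obtain ⟨C, hC⟩ := bounded_partials b hu hcompl p q hp hq U hpU hqU hUord hdisj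
      (fun n => f n z) ⟨P z, hfser z⟩
    refine ⟨C, fun N => ?_⟩
    rw [hΨapp]
    exact hC N
  obtain ⟨B, hB⟩ := banach_steinhaus hpb
  have hB0 : 0 ≤ B := le_trans (norm_nonneg (Ψ 0)) (hB 0)
  obtain ⟨s, hs⟩ := ha
  -- tails tend to zero
  have htail : Filter.Tendsto (fun N => s - ∑ n ∈ Finset.range N, a n • p n) atTop
      (nhds 0) := by
    have := Filter.Tendsto.sub (tendsto_const_nhds (x := s)) hs
    simpa using this
  -- evaluate f n on tails
  have hfs : ∀ n, f n s = a n := by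
    intro n
    have hvan : ∀ m, m ≠ n → f n (a m • p m) = 0 := by
      intro m hm
      rw [map_smul, smul_eq_mul, hbiorth n m, if_neg (Ne.symm hm), mul_zero]
    have := eval_series (f n) (fun m => a m • p m) s hs n hvan
    rw [this, map_smul, smul_eq_mul, hbiorth n n, if_pos rfl, mul_one]
  have hftail : ∀ n N, f n (s - ∑ m ∈ Finset.range N, a m • p m)
      = if n < N then 0 else a n := by
    intro n N
    rw [map_sub, hfs n, map_sum]
    have h1 : ∀ m ∈ Finset.range N, f n (a m • p m) = if n = m then a n else 0 := by
      intro m _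
      rw [map_smul, smul_eq_mul, hbiorth n m]
      by_cases h : n = m
      · subst h; simp
      · simp [h]
    rw [Finset.sum_congr rfl h1, Finset.sum_ite_eq]
    by_cases h : n < N
    · rw [if_pos (Finset.mem_range.2 h), if_pos h, sub_self]
    · rw [if_neg (fun hc => h (Finset.mem_range.1 hc)), if_neg h, sub_zero]
  -- chunk identity
  have hchunk : ∀ N M, N ≤ M → ∑ n ∈ Finset.Ico N M, a n • q n
      = Ψ M (s - ∑ m ∈ Finset.range N, a m • p m) := by
    intro N M hNM
    rw [hΨapp]
    have h1 : ∀ n ∈ Finset.range M,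
        f n (s - ∑ m ∈ Finset.range N, a m • p m) • q n
        = if n < N then 0 else a n • q n := by
      intro n _
      rw [hftail n N]
      by_cases h : n < N
      · rw [if_pos h, if_pos h, zero_smul]
      · rw [if_neg h, if_neg h]
    rw [Finset.sum_congr rfl h1]
    rw [← Finset.sum_range_add_sum_Ico _ hNM]
    have h2 : ∑ n ∈ Finset.range N, (if n < N then (0:X) else a n • q n) = 0 := by
      apply Finset.sum_eq_zero
      intro n hn
      rw [if_pos (Finset.mem_range.1 hn)]
    rw [h2, zero_add]
    apply Finset.sum_congr rfl
    intro n hn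
    rw [if_neg (by have := (Finset.mem_Ico.1 hn).1; omega)]
  -- Cauchy
  rw [converges_iff_cauchy, Metric.cauchySeq_iff']
  intro ε hε
  have hδ : (0:ℝ) < ε / (B + 1) := by positivity
  obtain ⟨N, hN⟩ := (Filter.tendsto_atTop'.1 htail) (Metric.ball 0 (ε/(B+1)))
    (Metric.ball_mem_nhds _ hδ)
  refine ⟨N, ?_⟩
  intro m hm
  rw [dist_eq_norm, PS_sub _ hm, hchunk N m hm]
  have h1 := hN N (le_refl N)
  rw [Metric.mem_ball, dist_eq_norm, sub_zero] at h1
  calc ‖Ψ m (s - ∑ k ∈ Finset.range N, a k • p k)‖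
      ≤ B * ‖s - ∑ k ∈ Finset.range N, a k • p k‖ := (Ψ m).le_of_opNorm_le (hB m) _
    _ ≤ B * (ε/(B+1)) := mul_le_mul_of_nonneg_left (le_of_lt h1) hB0
    _ < ε := by
        rw [mul_div_assoc']
        rw [div_lt_iff₀ (by linarith)]
        nlinarith
/-- the main theorem, internal version -/
lemma main_thm [CompleteSpace X] (hu : b.Unconditional)
    (hcompl : ∀ x : ℕ → X, b.IsBlockSeq x →
      ∃ (f : ℕ → X →L[ℝ] ℝ) (P : X →L[ℝ] X),
        (∀ n, ∀ m, m ∉ b.supp (x n) → f n (b.e m) = 0) ∧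
        (∀ z : X, Filter.Tendsto (fun N => ∑ n ∈ Finset.range N, f n z • x n)
          Filter.atTop (nhds (P z))) ∧
        (∀ n, P (x n) = x n)) :
    ∀ x y : ℕ → X, b.IsBlockSeq x → b.IsBlockSeq y →
      (∀ n, (∀ i ∈ b.supp (x n), ∀ j ∈ b.supp (y n), i < j) ∧
            (∀ j ∈ b.supp (y n), ∀ i ∈ b.supp (x (n+1)), j < i)) →
      SeqEquiv x y := by
  intro x y hx hy hxy
  set U : ℕ → Set ℕ := fun n => b.supp (x n) ∪ b.supp (y n) with hU
  have hxU : ∀ n, b.supp (x n) ⊆ U n := fun n => Set.subset_union_left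
  have hyU : ∀ n, b.supp (y n) ⊆ U n := fun n => Set.subset_union_right
  have hUord : ∀ n, ∀ i ∈ U n, ∀ j ∈ U (n+1), i < j := by
    intro n i hi j hj
    obtain ⟨k, hk⟩ := supp_nonempty b hy n
    obtain ⟨l, hl⟩ := supp_nonempty b hx (n+1)
    have hik : i < k ∨ i = k ∨ (i ∈ b.supp (y n)) := by
      rcases hi with h | h
      · exact Or.inl ((hxy n).1 i h k hk)
      · exact Or.inr (Or.inr h)
    have hkl : k < l := (hxy n).2 k hk l hl
    have hil : i < l := by
      rcases hik with h | h | h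
      · omega
      · omega
      · exact (hxy n).2 i h l hl
    rcases hj with h | h
    · -- j ∈ supp x (n+1)
      rcases hi with h' | h'
      · calc i < k := (hxy n).1 i h' k hk
          _ < j := (hxy n).2 k hk j h
      · exact (hxy n).2 i h' j h
    · -- j ∈ supp y (n+1)
      have hlj : l < j := (hxy (n+1)).1 l hl j h
      rcases hi with h' | h'
      · calc i < k := (hxy n).1 i h' k hk
          _ < l := hkl
          _ < j := hlj
      · calc i < l := (hxy n).2 i h' l hl
          _ < j := hlj
  have hdisj1 : ∀ n, ∀ j ∈ b.supp (x n), j ∉ b.supp (y n) := by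
    intro n j hj hj2
    exact lt_irrefl j ((hxy n).1 j hj j hj2)
  have hdisj2 : ∀ n, ∀ j ∈ b.supp (y n), j ∉ b.supp (x n) := by
    intro n j hj hj2
    exact lt_irrefl j ((hxy n).1 j hj2 j hj)
  intro a
  constructor
  · intro h
    exact dir b hu hcompl x y hx hy U hxU hyU hUord hdisj1 a h
  · intro h
    exact dir b hu hcompl y x hy hx U hyU hxU hUord hdisj2 a h
end Interlaced


theorem complemented_blocks_imp_interlaced_equivalent
    {X : Type*} [NormedAddCommGroup X] [NormedSpace ℝ X] [CompleteSpace X]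
    (b : SchauderBasisOld X) (hu : b.Unconditional)
    (hcompl : ∀ x : ℕ → X, b.IsBlockSeq x →
      ∃ (f : ℕ → X →L[ℝ] ℝ) (P : X →L[ℝ] X),
        (∀ n, ∀ m, m ∉ b.supp (x n) → f n (b.e m) = 0) ∧
        (∀ z : X, Filter.Tendsto (fun N => ∑ n ∈ Finset.range N, f n z • x n)
          Filter.atTop (nhds (P z))) ∧
        (∀ n, P (x n) = x n)) :
    ∀ x y : ℕ → X, b.IsBlockSeq x → b.IsBlockSeq y →
      (∀ n, (∀ i ∈ b.supp (x n), ∀ j ∈ b.supp (y n), i < j) ∧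
            (∀ j ∈ b.supp (y n), ∀ i ∈ b.supp (x (n+1)), j < i)) →
      SeqEquiv x y := by
  exact Interlaced.main_thm b hu hcompl
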